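/- Let p be an odd prime and α_p = exp(2πi/p). The p+1 orthonormal bases of ℂ^p consisting of the standard basis together with the p Fourier–Gauss bases B_m = { |j_m⟩ = p^{−1/2} Σ_{s=0}^{p−1} α_p^{js+ms²}|s⟩ : j = 0,…,p−1 } (m = 0,…,p−1) are pairwise mutually unbiased: |⟨j_m, k_n⟩|² = 1/p whenever m ≠ n, and similarly each B_m is mutually unbiased with the standard basis. -/

import Mathlib

/-- `α_p = exp(2πi/p)`, the `p`-th root of unity. -/
noncomputable def rootOfUnity (p : ℕ) : ℂ := Complex.exp (2 * Real.pi * Complex.I / p)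

/-- The Fourier–Gauss vector `|j_m⟩` with components `p^{-1/2}·α_p^{js + ms²}`. -/
noncomputable def fourierGauss (p : ℕ) (j m : ℕ) : EuclideanSpace ℂ (Fin p) :=
  WithLp.toLp 2 (fun s : Fin p => (Real.sqrt p : ℂ)⁻¹ * rootOfUnity p ^ (j * (s : ℕ) + m * (s : ℕ) ^ 2))

section aux
variable {p : ℕ} [NeZero p]

open ZMod Complex

local notation "ψc" => ZMod.stdAddChar

lemma root_pow (n : ℕ) : rootOfUnity p ^ n = stdAddChar ((n : ZMod p)) := by
  have : ((n : ℤ) : ZMod p) = (n : ZMod p) := by push_cast; ring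
  rw [← this, stdAddChar_coe, rootOfUnity, ← Complex.exp_nat_mul]
  push_cast
  ring_nf

lemma conj_std (x : ZMod p) : (starRingEnd ℂ) (stdAddChar x) = stdAddChar (-x) := by
  rw [stdAddChar_apply, stdAddChar_apply, ← Circle.coe_inv_eq_conj, ← AddChar.map_neg_eq_inv]

lemma abs_std (x : ZMod p) : ‖(stdAddChar x : ℂ)‖ = 1 := by
  rw [stdAddChar_apply]; exact Circle.norm_coe _

/-- key Gauss-sum lemma -/
lemma normSq_gauss (hp : p.Prime) (hodd : Odd p) (a b : ZMod p) (hb : b ≠ 0) :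
    Complex.normSq (∑ x : ZMod p, stdAddChar (a * x + b * x ^ 2)) = p := by
  haveI : Fact p.Prime := ⟨hp⟩
  have h2 : (2 : ZMod p) ≠ 0 := by
    intro h
    have h' : ((2 : ℕ) : ZMod p) = 0 := by exact_mod_cast h
    rw [ZMod.natCast_eq_zero_iff] at h'
    rcases (Nat.prime_dvd_prime_iff_eq hp Nat.prime_two).mp h' with rfl
    exact (Nat.not_even_iff_odd.mpr hodd) (even_iff_two_dvd.mpr ⟨1, rfl⟩)
  set T := ∑ x : ZMod p, stdAddChar (N := p) (a * x + b * x ^ 2) with hT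
  have key : T * (starRingEnd ℂ) T = p := by
    calc T * (starRingEnd ℂ) T
        = ∑ y : ZMod p, ∑ x : ZMod p, stdAddChar (a*x+b*x^2) * stdAddChar (-(a*y+b*y^2)) := by
          rw [hT, map_sum]
          simp only [conj_std]
          rw [Finset.sum_mul_sum]
          exact Finset.sum_comm
      _ = ∑ y : ZMod p, ∑ u : ZMod p, stdAddChar (a*u+b*u^2) * stdAddChar (y * (2*b*u)) := by
          refine Finset.sum_congr rfl fun y _ => ?_
          rw [← Equiv.sum_comp (Equiv.addRight y)
            (fun x => stdAddChar (a*x+b*x^2) * stdAddChar (-(a*y+b*y^2)))]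
          refine Finset.sum_congr rfl fun u _ => ?_
          simp only [Equiv.coe_addRight]
          rw [← AddChar.map_add_eq_mul, ← AddChar.map_add_eq_mul]
          congr 1
          ring
      _ = ∑ u : ZMod p, stdAddChar (a*u+b*u^2) * ∑ y : ZMod p, stdAddChar (y * (2*b*u)) := by
          rw [Finset.sum_comm]
          simp_rw [Finset.mul_sum]
      _ = ∑ u : ZMod p, stdAddChar (a*u+b*u^2) *
            ((if 2*b*u = 0 then Fintype.card (ZMod p) else 0 : ℕ) : ℂ) := by
          simp_rw [AddChar.sum_mulShift _ (ZMod.isPrimitive_stdAddChar p)]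
      _ = p := by
          rw [Finset.sum_eq_single 0]
          · simp [ZMod.card]
          · intro u _ hu
            have hne : 2*b*u ≠ 0 := mul_ne_zero (mul_ne_zero h2 hb) hu
            simp [hne]
          · intro h; exact absurd (Finset.mem_univ 0) h
  have h2 : ((Complex.normSq T : ℝ) : ℂ) = p := by rw [← Complex.mul_conj]; exact key
  exact_mod_cast h2

end aux

/-- For an odd prime `p`, the standard basis together with the `p` Fourier–Gauss bases
`B_m = {|j_m⟩}` are pairwise mutually unbiased: `|⟨j_m, k_n⟩|² = 1/p` for `m ≠ n`, and
`|⟨s, j_m⟩|² = 1/p` against the standard basis. -/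
theorem fourierGauss_mutually_unbiased (p : ℕ) (hp : p.Prime) (hodd : Odd p) :
    (∀ m n j k : Fin p, m ≠ n →
      ‖(inner ℂ (fourierGauss p (j : ℕ) (m : ℕ))
          (fourierGauss p (k : ℕ) (n : ℕ)) : ℂ)‖ ^ 2 = 1 / (p : ℝ)) ∧
    (∀ (s : Fin p) (m j : Fin p),
      ‖(inner ℂ (EuclideanSpace.single s (1 : ℂ))
          (fourierGauss p (j : ℕ) (m : ℕ)) : ℂ)‖ ^ 2 = 1 / (p : ℝ)) := by
  haveI : NeZero p := ⟨hp.ne_zero⟩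
  have hp0 : (0 : ℝ) < p := by exact_mod_cast hp.pos
  have habs_c : ‖((Real.sqrt p : ℂ))⁻¹‖ = (Real.sqrt p)⁻¹ := by
    rw [norm_inv, Complex.norm_real, Real.norm_of_nonneg (Real.sqrt_nonneg p)]
  constructor
  · intro m n j k hmn
    set av : ZMod p := ((k : ℕ) : ZMod p) - ((j : ℕ) : ZMod p) with hav
    set bv : ZMod p := ((n : ℕ) : ZMod p) - ((m : ℕ) : ZMod p) with hbv
    have hb : bv ≠ 0 := by
      intro h
      apply hmn
      have : ((n : ℕ) : ZMod p) = ((m : ℕ) : ZMod p) := by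
        rwa [hbv, sub_eq_zero] at h
      have hval := congrArg ZMod.val this
      rwa [ZMod.val_cast_of_lt n.isLt, ZMod.val_cast_of_lt m.isLt, eq_comm,
        ← Fin.ext_iff] at hval
    have hf : Function.Bijective (fun s : Fin p => ((s : ℕ) : ZMod p)) := by
      refine (Fintype.bijective_iff_injective_and_card _).mpr ⟨?_, by simp [ZMod.card]⟩
      intro s t h
      have := congrArg ZMod.val h
      rwa [ZMod.val_cast_of_lt s.isLt, ZMod.val_cast_of_lt t.isLt, ← Fin.ext_iff] at this
    have hin : (inner ℂ (fourierGauss p (j : ℕ) (m : ℕ))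
        (fourierGauss p (k : ℕ) (n : ℕ)) : ℂ)
        = (p : ℂ)⁻¹ * ∑ x : ZMod p, ZMod.stdAddChar (av * x + bv * x ^ 2) := by
      rw [PiLp.inner_apply, Finset.mul_sum]
      refine Fintype.sum_bijective _ hf _ _ fun s => ?_
      simp only [fourierGauss, PiLp.toLp_apply, RCLike.inner_apply', root_pow, map_mul, conj_std,
        Complex.conj_ofReal, map_inv₀]
      have hcast1 : (((j : ℕ) * (s : ℕ) + (m : ℕ) * (s : ℕ) ^ 2 : ℕ) : ZMod p)
          = ((j : ℕ) : ZMod p) * ((s : ℕ) : ZMod p)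
            + ((m : ℕ) : ZMod p) * ((s : ℕ) : ZMod p) ^ 2 := by push_cast; ring
      have hcast2 : (((k : ℕ) * (s : ℕ) + (n : ℕ) * (s : ℕ) ^ 2 : ℕ) : ZMod p)
          = ((k : ℕ) : ZMod p) * ((s : ℕ) : ZMod p)
            + ((n : ℕ) : ZMod p) * ((s : ℕ) : ZMod p) ^ 2 := by push_cast; ring
      rw [hcast1, hcast2]
      have hc : ((Real.sqrt p : ℝ) : ℂ)⁻¹ * ((Real.sqrt p : ℝ) : ℂ)⁻¹ = (p : ℂ)⁻¹ := by
        have hq : ((Real.sqrt p : ℝ) : ℂ) * ((Real.sqrt p : ℝ) : ℂ) = (p : ℂ) := by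
          norm_cast
          exact Real.mul_self_sqrt hp0.le
        rw [← mul_inv, hq]
      set x : ZMod p := ((s : ℕ) : ZMod p) with hx
      have harg : -(((j:ℕ):ZMod p) * x + ((m:ℕ):ZMod p) * x^2)
          + (((k:ℕ):ZMod p) * x + ((n:ℕ):ZMod p) * x^2) = av * x + bv * x^2 := by
        rw [hav, hbv]; ring
      calc ((Real.sqrt p : ℝ) : ℂ)⁻¹
            * ZMod.stdAddChar (-(((j:ℕ):ZMod p) * x + ((m:ℕ):ZMod p) * x^2))
            * (((Real.sqrt p : ℝ) : ℂ)⁻¹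
              * ZMod.stdAddChar (((k:ℕ):ZMod p) * x + ((n:ℕ):ZMod p) * x^2))
          = (((Real.sqrt p : ℝ) : ℂ)⁻¹ * ((Real.sqrt p : ℝ) : ℂ)⁻¹)
            * (ZMod.stdAddChar (-(((j:ℕ):ZMod p) * x + ((m:ℕ):ZMod p) * x^2))
              * ZMod.stdAddChar (((k:ℕ):ZMod p) * x + ((n:ℕ):ZMod p) * x^2)) := by ring
        _ = (p : ℂ)⁻¹ * ZMod.stdAddChar (av * x + bv * x ^ 2) := by
            rw [hc, ← AddChar.map_add_eq_mul, harg]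
    rw [hin, norm_mul, mul_pow, Complex.sq_norm, Complex.sq_norm,
      normSq_gauss hp hodd av bv hb, Complex.normSq_inv, Complex.normSq_natCast]
    rw [one_div]
    rw [eq_comm, inv_eq_iff_eq_inv, eq_comm]
    field_simp
  · intro s m j
    rw [EuclideanSpace.inner_single_left]
    simp only [map_one, one_mul, fourierGauss, PiLp.toLp_apply]
    rw [norm_mul, root_pow, abs_std, mul_one, habs_c, inv_pow, Real.sq_sqrt hp0.le, one_div]
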